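/- If K is diametrically complete with respect to C (every proper superset of K has strictly larger diameter with respect to C), then R(K,C)/r(K,C) ≤ s(K)·s(C). -/

import Mathlib

open Pointwise

/-- A convex body: compact, convex, with nonempty interior. -/
def IsBody {n : ℕ} (K : Set (Fin n → ℝ)) : Prop :=
  Convex ℝ K ∧ IsCompact K ∧ (interior K).Nonempty

/-- Circumradius of `K` w.r.t. `C`: smallest `ρ > 0` with `K` contained in a translate of `ρ • C`. -/
noncomputable def circR {n : ℕ} (K C : Set (Fin n → ℝ)) : ℝ :=
  sInf {ρ : ℝ | 0 < ρ ∧ ∃ t : Fin n → ℝ, K ⊆ t +ᵥ ρ • C}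

/-- Inradius of `K` w.r.t. `C`: largest `ρ ≥ 0` with a translate of `ρ • C` inside `K`. -/
noncomputable def inrad {n : ℕ} (K C : Set (Fin n → ℝ)) : ℝ :=
  sSup {ρ : ℝ | 0 ≤ ρ ∧ ∃ t : Fin n → ℝ, t +ᵥ ρ • C ⊆ K}

/-- Minkowski asymmetry `s(K) = R(-K, K)`. -/
noncomputable def asym {n : ℕ} (K : Set (Fin n → ℝ)) : ℝ := circR (-K) K

/-- Diameter of `K` w.r.t. `C`: twice the maximal circumradius of a segment with endpoints in `K`. -/
noncomputable def diamC {n : ℕ} (K C : Set (Fin n → ℝ)) : ℝ :=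
  sSup {d : ℝ | ∃ x ∈ K, ∃ y ∈ K, d = 2 * circR (segment ℝ x y) C}

/-- `K` is (diametrically) complete w.r.t. `C`. -/
def IsDiamComplete {n : ℕ} (K C : Set (Fin n → ℝ)) : Prop :=
  ∀ K' : Set (Fin n → ℝ), IsBody K' → K ⊂ K' → diamC K C < diamC K' C

/-- `S` is an `n`-simplex: convex hull of `n+1` affinely independent points. -/
def IsSimplexBody {n : ℕ} (S : Set (Fin n → ℝ)) : Prop :=
  ∃ p : Fin (n + 1) → (Fin n → ℝ), AffineIndependent ℝ p ∧ S = convexHull ℝ (Set.range p)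

/-- Support function of `C`. -/
noncomputable def supp {n : ℕ} (C : Set (Fin n → ℝ)) (a : Fin n → ℝ) : ℝ :=
  sSup {r : ℝ | ∃ x ∈ C, r = dotProduct a x}

/-- `A ⊆ₜ B`: `A` is contained in some translate of `B`. -/
def SubsetT {n : ℕ} (A B : Set (Fin n → ℝ)) : Prop := ∃ t : Fin n → ℝ, A ⊆ t +ᵥ B

variable {n : ℕ}

/-- admissible set for circumradius -/
def admR (A C : Set (Fin n → ℝ)) : Set ℝ := {ρ : ℝ | 0 < ρ ∧ ∃ t : Fin n → ℝ, A ⊆ t +ᵥ ρ • C}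

lemma circR_eq (A C : Set (Fin n → ℝ)) : circR A C = sInf (admR A C) := rfl

def admr (K C : Set (Fin n → ℝ)) : Set ℝ := {ρ : ℝ | 0 ≤ ρ ∧ ∃ t : Fin n → ℝ, t +ᵥ ρ • C ⊆ K}

lemma inrad_eq (K C : Set (Fin n → ℝ)) : inrad K C = sSup (admr K C) := rfl

lemma aux10_mem_vadd {t x : Fin n → ℝ} {S : Set (Fin n → ℝ)} : x ∈ t +ᵥ S ↔ x - t ∈ S := by
  rw [Set.mem_vadd_set_iff_neg_vadd_mem, vadd_eq_add, neg_add_eq_sub]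

lemma admR_bddBelow (A C : Set (Fin n → ℝ)) : BddBelow (admR A C) :=
  ⟨0, fun ρ hρ => hρ.1.le⟩

lemma circR_nonneg (A C : Set (Fin n → ℝ)) : 0 ≤ circR A C :=
  Real.sInf_nonneg fun _ hρ => hρ.1.le

/-- upward closedness -/
lemma admR_up {A C : Set (Fin n → ℝ)} (hC : Convex ℝ C) {c₀ : Fin n → ℝ} (hc₀ : c₀ ∈ C)
    {ρ₁ ρ₂ : ℝ} (h₁ : ρ₁ ∈ admR A C) (h₁₂ : ρ₁ ≤ ρ₂) : ρ₂ ∈ admR A C := by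
  obtain ⟨hρ₁, t, ht⟩ := h₁
  refine ⟨lt_of_lt_of_le hρ₁ h₁₂, t - (ρ₂ - ρ₁) • c₀, fun a ha => ?_⟩
  rw [aux10_mem_vadd]
  have hsum : ρ₂ • C = ρ₁ • C + (ρ₂ - ρ₁) • C := by
    rw [← Convex.add_smul hC hρ₁.le (by linarith)]
    ring_nf
  rw [hsum]
  have h2 := ht ha
  rw [aux10_mem_vadd] at h2
  have : a - (t - (ρ₂ - ρ₁) • c₀) = (a - t) + (ρ₂ - ρ₁) • c₀ := by abel
  rw [this]
  exact Set.add_mem_add h2 (Set.smul_mem_smul_set hc₀)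

/-- admissible set nonempty for bounded A and C with interior ball -/
lemma admR_nonempty {A C : Set (Fin n → ℝ)} {M δ : ℝ} (hM : 0 < M) (hA : ∀ a ∈ A, ‖a‖ ≤ M)
    {c₀ : Fin n → ℝ} (hδ : 0 < δ) (hball : Metric.ball c₀ δ ⊆ C) :
    ((2 * M + 1) / δ) ∈ admR A C := by
  set ρ := (2 * M + 1) / δ with hρdef
  have hρ : 0 < ρ := by positivity
  refine ⟨hρ, -(ρ • c₀), fun a ha => ?_⟩
  rw [aux10_mem_vadd]
  have : a - -(ρ • c₀) = ρ • (c₀ + ρ⁻¹ • a) := by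
    rw [smul_add, smul_smul, mul_inv_cancel₀ hρ.ne', one_smul]; abel
  rw [this]
  refine Set.smul_mem_smul_set (hball ?_)
  rw [Metric.mem_ball, dist_eq_norm]
  have : c₀ + ρ⁻¹ • a - c₀ = ρ⁻¹ • a := by abel
  rw [this, norm_smul, norm_inv, Real.norm_eq_abs, abs_of_pos hρ]
  have h1 : ‖a‖ ≤ M := hA a ha
  rw [hρdef]
  rw [inv_div, div_mul_eq_mul_div, mul_comm]
  rw [div_lt_iff₀ (by positivity)]
  calc ‖a‖ * δ ≤ M * δ := by nlinarith
    _ < δ * (2*M+1) := by nlinarith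

lemma circR_le {A C : Set (Fin n → ℝ)} {ρ : ℝ} (h : ρ ∈ admR A C) : circR A C ≤ ρ :=
  csInf_le (admR_bddBelow A C) h

lemma admR_of_gt {A C : Set (Fin n → ℝ)} (hC : Convex ℝ C) {c₀ : Fin n → ℝ} (hc₀ : c₀ ∈ C)
    (hne : (admR A C).Nonempty) {ρ : ℝ} (h : circR A C < ρ) : ρ ∈ admR A C := by
  obtain ⟨ρ', hρ', hlt⟩ := (csInf_lt_iff (admR_bddBelow A C) hne).mp h
  exact admR_up hC hc₀ hρ' hlt.le
/-- gauge w.r.t. the symmetric body C - C -/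
noncomputable def gg (C : Set (Fin n → ℝ)) (v : Fin n → ℝ) : ℝ :=
  sInf {ρ : ℝ | 0 < ρ ∧ v ∈ ρ • (C - C)}

lemma gg_bddBelow (C : Set (Fin n → ℝ)) (v : Fin n → ℝ) :
    BddBelow {ρ : ℝ | 0 < ρ ∧ v ∈ ρ • (C - C)} := ⟨0, fun _ h => h.1.le⟩

lemma gg_nonneg (C : Set (Fin n → ℝ)) (v : Fin n → ℝ) : 0 ≤ gg C v :=
  Real.sInf_nonneg fun _ h => h.1.le

lemma gg_le {C : Set (Fin n → ℝ)} {v : Fin n → ℝ} {ρ : ℝ} (hρ : 0 < ρ) (h : v ∈ ρ • (C - C)) :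
    gg C v ≤ ρ := csInf_le (gg_bddBelow C v) ⟨hρ, h⟩

/-- membership is upward closed (C - C is convex, contains 0) -/
lemma gg_up {C : Set (Fin n → ℝ)} (hC : Convex ℝ C) (hCne : C.Nonempty) {v : Fin n → ℝ}
    {ρ₁ ρ₂ : ℝ} (h₁ : 0 < ρ₁) (h : v ∈ ρ₁ • (C - C)) (h₁₂ : ρ₁ ≤ ρ₂) : v ∈ ρ₂ • (C - C) := by
  obtain ⟨b, hb, hbv⟩ := Set.mem_smul_set.mp h
  have hρ₂ : 0 < ρ₂ := lt_of_lt_of_le h₁ h₁₂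
  have h0 : (0 : Fin n → ℝ) ∈ C - C := by
    obtain ⟨c, hc⟩ := hCne
    have := Set.sub_mem_sub hc hc
    simpa using this
  have hBconv : Convex ℝ (C - C) := hC.sub hC
  refine Set.mem_smul_set.mpr ⟨(ρ₁ / ρ₂) • b, ?_, ?_⟩
  · have hle1 : ρ₁/ρ₂ ≤ 1 := (div_le_one hρ₂).mpr h₁₂
    have := hBconv h0 hb (by linarith : (0:ℝ) ≤ 1 - ρ₁/ρ₂)
      (by positivity : (0:ℝ) ≤ ρ₁/ρ₂) (by ring)
    simpa using this
  · rw [smul_smul, mul_div_cancel₀ _ hρ₂.ne']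
    exact hbv

lemma gg_nonempty {C : Set (Fin n → ℝ)} {c₀ : Fin n → ℝ} {δ : ℝ} (hδ : 0 < δ)
    (hball : Metric.ball c₀ δ ⊆ C) (v : Fin n → ℝ) :
    ((‖v‖ + 1) / δ) ∈ {ρ : ℝ | 0 < ρ ∧ v ∈ ρ • (C - C)} := by
  set ρ := (‖v‖ + 1) / δ with hρdef
  have hρ : 0 < ρ := by positivity
  refine ⟨hρ, Set.mem_smul_set.mpr ⟨(c₀ + ρ⁻¹ • v) - c₀, Set.sub_mem_sub (hball ?_) (hball ?_), ?_⟩⟩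
  · rw [Metric.mem_ball, dist_eq_norm]
    have : c₀ + ρ⁻¹ • v - c₀ = ρ⁻¹ • v := by abel
    rw [this, norm_smul, norm_inv, Real.norm_eq_abs, abs_of_pos hρ, hρdef, inv_div,
      div_mul_eq_mul_div, mul_comm, div_lt_iff₀ (by positivity)]
    nlinarith [norm_nonneg v]
  · exact Metric.mem_ball_self hδ
  · have : c₀ + ρ⁻¹ • v - c₀ = ρ⁻¹ • v := by abel
    rw [this, smul_smul, mul_inv_cancel₀ hρ.ne', one_smul]

lemma gg_ub {C : Set (Fin n → ℝ)} {c₀ : Fin n → ℝ} {δ : ℝ} (hδ : 0 < δ)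
    (hball : Metric.ball c₀ δ ⊆ C) (v : Fin n → ℝ) : gg C v ≤ (‖v‖ + 1) / δ := by
  have h := gg_nonempty hδ hball v
  exact csInf_le (gg_bddBelow C v) h

lemma gg_mem_of_gt {C : Set (Fin n → ℝ)} (hC : Convex ℝ C) {c₀ : Fin n → ℝ} {δ : ℝ} (hδ : 0 < δ)
    (hball : Metric.ball c₀ δ ⊆ C) {v : Fin n → ℝ} {ρ : ℝ} (h : gg C v < ρ) : v ∈ ρ • (C - C) := by
  have hne : {ρ' : ℝ | 0 < ρ' ∧ v ∈ ρ' • (C - C)}.Nonempty := ⟨_, gg_nonempty hδ hball v⟩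
  obtain ⟨ρ', hρ', hlt⟩ := (csInf_lt_iff (gg_bddBelow C v) hne).mp h
  have hCne : C.Nonempty := ⟨c₀, hball (Metric.mem_ball_self hδ)⟩
  exact gg_up hC hCne hρ'.1 hρ'.2 hlt.le

lemma gg_zero {C : Set (Fin n → ℝ)} {c₀ : Fin n → ℝ} {δ : ℝ} (hδ : 0 < δ)
    (hball : Metric.ball c₀ δ ⊆ C) : gg C 0 = 0 := by
  refine le_antisymm ?_ (gg_nonneg C 0)
  have h : ∀ ε : ℝ, 0 < ε → gg C 0 ≤ 0 + ε := by
    intro ε hε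
    rw [zero_add]
    refine gg_le hε ?_
    have h0 : (0 : Fin n → ℝ) ∈ C - C := by
      have hc : c₀ ∈ C := hball (Metric.mem_ball_self hδ)
      simpa using Set.sub_mem_sub hc hc
    exact ⟨0, h0, smul_zero ε⟩
  exact le_of_forall_pos_le_add h

lemma gg_neg {C : Set (Fin n → ℝ)} (v : Fin n → ℝ) : gg C (-v) = gg C v := by
  have key : ∀ w : Fin n → ℝ, ∀ ρ : ℝ, w ∈ ρ • (C - C) → -w ∈ ρ • (C - C) := by
    intro w ρ hw
    obtain ⟨b, hb, hbw⟩ := Set.mem_smul_set.mp hw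
    obtain ⟨x, hx, y, hy, hxy⟩ := Set.mem_sub.mp hb
    refine Set.mem_smul_set.mpr ⟨y - x, Set.sub_mem_sub hy hx, ?_⟩
    rw [← hbw, ← hxy, smul_sub, smul_sub]; abel
  unfold gg
  congr 1
  ext ρ
  exact ⟨fun h => ⟨h.1, by simpa using key _ _ h.2⟩, fun h => ⟨h.1, key _ _ h.2⟩⟩

lemma gg_add {C : Set (Fin n → ℝ)} (hC : Convex ℝ C) {c₀ : Fin n → ℝ} {δ : ℝ} (hδ : 0 < δ)
    (hball : Metric.ball c₀ δ ⊆ C) (u v : Fin n → ℝ) : gg C (u + v) ≤ gg C u + gg C v := by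
  refine le_of_forall_pos_le_add fun ε hε => ?_
  have h1 : u ∈ (gg C u + ε/2) • (C - C) := gg_mem_of_gt hC hδ hball (by linarith)
  have h2 : v ∈ (gg C v + ε/2) • (C - C) := gg_mem_of_gt hC hδ hball (by linarith)
  have hBconv : Convex ℝ (C - C) := hC.sub hC
  have hpos1 : (0:ℝ) ≤ gg C u + ε/2 := by have := gg_nonneg C u; linarith
  have hpos2 : (0:ℝ) ≤ gg C v + ε/2 := by have := gg_nonneg C v; linarith
  have hsum : (gg C u + ε/2 + (gg C v + ε/2)) • (C - C)
      = (gg C u + ε/2) • (C - C) + (gg C v + ε/2) • (C - C) :=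
    Convex.add_smul hBconv hpos1 hpos2
  have : u + v ∈ (gg C u + ε/2 + (gg C v + ε/2)) • (C - C) := by
    rw [hsum]; exact Set.add_mem_add h1 h2
  have hle := gg_le (by linarith [gg_nonneg C u, gg_nonneg C v] : (0:ℝ) < gg C u + ε/2 + (gg C v + ε/2)) this
  linarith

lemma gg_smul_le {C : Set (Fin n → ℝ)} (hC : Convex ℝ C) {c₀ : Fin n → ℝ} {δ : ℝ} (hδ : 0 < δ)
    (hball : Metric.ball c₀ δ ⊆ C) {lam : ℝ} (hlam : 0 ≤ lam) (v : Fin n → ℝ) :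
    gg C (lam • v) ≤ lam * gg C v := by
  rcases eq_or_lt_of_le hlam with h0 | hpos
  · rw [← h0, zero_smul, gg_zero hδ hball, zero_mul]
  refine le_of_forall_pos_le_add fun ε hε => ?_
  have h1 : v ∈ (gg C v + ε/lam) • (C - C) := gg_mem_of_gt hC hδ hball (by
    have : 0 < ε/lam := by positivity
    linarith)
  obtain ⟨b, hb, hbv⟩ := Set.mem_smul_set.mp h1
  have h2 : lam • v ∈ (lam * (gg C v + ε/lam)) • (C - C) :=
    Set.mem_smul_set.mpr ⟨b, hb, by rw [← smul_smul, hbv]⟩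
  have hle := gg_le (by have := gg_nonneg C v; positivity) h2
  have : lam * (gg C v + ε/lam) = lam * gg C v + ε := by field_simp
  linarith
/-- circumradius of a segment equals the gauge of the difference -/
lemma circR_segment {C : Set (Fin n → ℝ)} (hC : Convex ℝ C) (x y : Fin n → ℝ) :
    circR (segment ℝ x y) C = gg C (x - y) := by
  unfold circR gg
  congr 1
  ext ρ
  simp only [Set.mem_setOf_eq]
  constructor
  · rintro ⟨hρ, t, ht⟩
    refine ⟨hρ, ?_⟩
    have hx := ht (left_mem_segment ℝ x y)
    have hy := ht (right_mem_segment ℝ x y)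
    rw [aux10_mem_vadd] at hx hy
    obtain ⟨c₁, hc₁, hc₁e⟩ := Set.mem_smul_set.mp hx
    obtain ⟨c₂, hc₂, hc₂e⟩ := Set.mem_smul_set.mp hy
    refine Set.mem_smul_set.mpr ⟨c₁ - c₂, Set.sub_mem_sub hc₁ hc₂, ?_⟩
    rw [smul_sub, hc₁e, hc₂e]; abel
  · rintro ⟨hρ, hmem⟩
    obtain ⟨b, hb, hbe⟩ := Set.mem_smul_set.mp hmem
    obtain ⟨c₁, hc₁, c₂, hc₂, hce⟩ := Set.mem_sub.mp hb
    refine ⟨hρ, x - ρ • c₁, ?_⟩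
    have hconv : Convex ℝ ((x - ρ • c₁) +ᵥ ρ • C) := (hC.smul ρ).vadd _
    have hx : x ∈ (x - ρ • c₁) +ᵥ ρ • C := by
      rw [aux10_mem_vadd]
      refine Set.mem_smul_set.mpr ⟨c₁, hc₁, ?_⟩; abel
    have hy : y ∈ (x - ρ • c₁) +ᵥ ρ • C := by
      rw [aux10_mem_vadd]
      refine Set.mem_smul_set.mpr ⟨c₂, hc₂, ?_⟩
      have : y = x - ρ • (c₁ - c₂) := by rw [← hce] at hbe; rw [hbe]; abel
      rw [this, smul_sub]; abel
    exact hconv.segment_subset hx hy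

/-- lower bound on gauge from boundedness of C -/
lemma gg_lb {C : Set (Fin n → ℝ)} {M : ℝ} (hM : 0 < M) (hCb : ∀ c ∈ C, ‖c‖ ≤ M)
    {c₀ : Fin n → ℝ} {δ : ℝ} (hδ : 0 < δ) (hball : Metric.ball c₀ δ ⊆ C)
    (v : Fin n → ℝ) : ‖v‖ ≤ 2 * M * gg C v := by
  have key : ∀ ρ ∈ {ρ : ℝ | 0 < ρ ∧ v ∈ ρ • (C - C)}, ‖v‖ / (2 * M) ≤ ρ := by
    rintro ρ ⟨hρ, hmem⟩
    obtain ⟨b, hb, hbe⟩ := Set.mem_smul_set.mp hmem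
    obtain ⟨c₁, hc₁, c₂, hc₂, hce⟩ := Set.mem_sub.mp hb
    have hbn : ‖b‖ ≤ 2 * M := by
      rw [← hce]
      calc ‖c₁ - c₂‖ ≤ ‖c₁‖ + ‖c₂‖ := norm_sub_le _ _
        _ ≤ 2 * M := by have := hCb c₁ hc₁; have := hCb c₂ hc₂; linarith
    have hv : ‖v‖ = ρ * ‖b‖ := by rw [← hbe, norm_smul, Real.norm_eq_abs, abs_of_pos hρ]
    rw [div_le_iff₀ (by positivity)]
    nlinarith
  have hne : {ρ : ℝ | 0 < ρ ∧ v ∈ ρ • (C - C)}.Nonempty := ⟨_, gg_nonempty hδ hball v⟩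
  have h := le_csInf hne key
  have h2 : ‖v‖ / (2 * M) ≤ gg C v := h
  rw [div_le_iff₀ (by positivity : (0:ℝ) < 2*M)] at h2
  linarith
lemma diamC_eq (K C : Set (Fin n → ℝ)) :
    diamC K C = sSup {d : ℝ | ∃ x ∈ K, ∃ y ∈ K, d = 2 * circR (segment ℝ x y) C} := rfl

lemma diam_bddAbove {K C : Set (Fin n → ℝ)} (hC : Convex ℝ C) {MK δ : ℝ}
    (hMK : ∀ a ∈ K, ‖a‖ ≤ MK) {c₀ : Fin n → ℝ} (hδ : 0 < δ) (hball : Metric.ball c₀ δ ⊆ C) :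
    BddAbove {d : ℝ | ∃ x ∈ K, ∃ y ∈ K, d = 2 * circR (segment ℝ x y) C} := by
  refine ⟨2 * ((2 * MK + 1) / δ), ?_⟩
  rintro d ⟨x, hx, y, hy, rfl⟩
  rw [circR_segment hC]
  have h1 : gg C (x - y) ≤ (‖x - y‖ + 1) / δ := gg_ub hδ hball _
  have h2 : ‖x - y‖ ≤ 2 * MK := by
    calc ‖x - y‖ ≤ ‖x‖ + ‖y‖ := norm_sub_le _ _
      _ ≤ 2 * MK := by have := hMK x hx; have := hMK y hy; linarith
  have h3 : (‖x - y‖ + 1) / δ ≤ (2 * MK + 1) / δ := by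
    gcongr
  linarith

lemma compact_hull_insert {K : Set (Fin n → ℝ)} (hconv : Convex ℝ K) (hcomp : IsCompact K)
    (hne : K.Nonempty) (p : Fin n → ℝ) : IsCompact (convexHull ℝ (insert p K)) := by
  rw [convexHull_insert hne, hconv.convexHull_eq]
  have himg : convexJoin ℝ {p} K =
      (fun q : ℝ × (Fin n → ℝ) => (1 - q.1) • p + q.1 • q.2) '' (Set.Icc (0:ℝ) 1 ×ˢ K) := by
    rw [convexJoin_singleton_left]
    ext z
    simp only [Set.mem_iUnion, Set.mem_image, Set.mem_prod]
    constructor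
    · rintro ⟨y, hy, hz⟩
      rw [segment_eq_image ℝ p y] at hz
      obtain ⟨θ, hθ, hθz⟩ := hz
      exact ⟨(θ, y), ⟨hθ, hy⟩, hθz⟩
    · rintro ⟨⟨θ, y⟩, ⟨hθ, hy⟩, hz⟩
      refine ⟨y, hy, ?_⟩
      rw [segment_eq_image ℝ p y]
      exact ⟨θ, hθ, hz⟩
  rw [himg]
  exact (isCompact_Icc.prod hcomp).image (by fun_prop)
set_option maxHeartbeats 2000000 in
theorem stmt10 {n : ℕ} (K C : Set (Fin n → ℝ)) (hK : IsBody K) (hC : IsBody C)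
    (hcomp : IsDiamComplete K C) :
    circR K C / inrad K C ≤ asym K * asym C := by
  obtain ⟨hKconv, hKcomp, hKint⟩ := hK
  obtain ⟨hCconv, hCcomp, hCint⟩ := hC
  have hKne : K.Nonempty := hKint.mono interior_subset
  have hCne : C.Nonempty := hCint.mono interior_subset
  have hsK0 : 0 ≤ asym K := circR_nonneg _ _
  have hsC0 : 0 ≤ asym C := circR_nonneg _ _
  rcases Nat.eq_zero_or_pos n with hn | hn
  · -- degenerate case n = 0
    subst hn
    haveI : Subsingleton (Fin 0 → ℝ) := ⟨fun a b => funext fun i => absurd i.2 (by omega)⟩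
    obtain ⟨c, hc⟩ := hCne
    have hR : circR K C = 0 := by
      refine le_antisymm ?_ (circR_nonneg _ _)
      refine le_of_forall_pos_le_add fun ε hε => ?_
      rw [zero_add]
      refine circR_le ⟨hε, 0, fun a ha => ?_⟩
      rw [aux10_mem_vadd]
      exact Set.mem_smul_set.mpr ⟨c, hc, Subsingleton.elim _ _⟩
    rw [hR, zero_div]
    exact mul_nonneg hsK0 hsC0
  -- main case n ≥ 1
  obtain ⟨c₀, hc₀i⟩ := hCint
  obtain ⟨δC, hδC, hballC⟩ := Metric.mem_nhds_iff.mp (mem_interior_iff_mem_nhds.mp hc₀i)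
  obtain ⟨k₀, hk₀i⟩ := hKint
  obtain ⟨δK, hδK, hballK⟩ := Metric.mem_nhds_iff.mp (mem_interior_iff_mem_nhds.mp hk₀i)
  have hc₀C : c₀ ∈ C := hballC (Metric.mem_ball_self hδC)
  have hk₀K : k₀ ∈ K := hballK (Metric.mem_ball_self hδK)
  obtain ⟨MC0, hMC0⟩ := hCcomp.isBounded.exists_norm_le
  obtain ⟨MK0, hMK0⟩ := hKcomp.isBounded.exists_norm_le
  set MC := max MC0 1 with hMCdef
  set MK := max MK0 1 with hMKdef
  have hMCpos : (0:ℝ) < MC := lt_of_lt_of_le one_pos (le_max_right _ _)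
  have hMKpos : (0:ℝ) < MK := lt_of_lt_of_le one_pos (le_max_right _ _)
  have hMC : ∀ c' ∈ C, ‖c'‖ ≤ MC := fun c' hc' => (hMC0 c' hc').trans (le_max_left _ _)
  have hMK : ∀ a ∈ K, ‖a‖ ≤ MK := fun a ha => (hMK0 a ha).trans (le_max_left _ _)
  have hMnegC : ∀ a ∈ -C, ‖a‖ ≤ MC := fun a ha => by
    rw [← norm_neg]; exact hMC (-a) (Set.mem_neg.mp ha)
  have hMnegK : ∀ a ∈ -K, ‖a‖ ≤ MK := fun a ha => by
    rw [← norm_neg]; exact hMK (-a) (Set.mem_neg.mp ha)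
  -- the symmetric body B = C - C
  set B := C - C with hBdef
  have hBconv : Convex ℝ B := hCconv.sub hCconv
  have hballB : Metric.ball (0 : Fin n → ℝ) δC ⊆ B := by
    intro v hv
    refine Set.mem_sub.mpr ⟨c₀ + v, hballC ?_, c₀, hc₀C, by abel⟩
    rw [Metric.mem_ball, dist_eq_norm]
    have : c₀ + v - c₀ = v := by abel
    rw [this]
    simpa [dist_eq_norm] using hv
  -- nonemptiness of admissible sets
  have hSC_ne : (admR (-C) C).Nonempty := ⟨_, admR_nonempty hMCpos hMnegC hδC hballC⟩
  have hSK_ne : (admR (-K) K).Nonempty := ⟨_, admR_nonempty hMKpos hMnegK hδK hballK⟩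
  have hRKB_ne : (admR K B).Nonempty := ⟨_, admR_nonempty hMKpos hMK hδC hballB⟩
  -- two distinct points
  haveI : Nonempty (Fin n) := ⟨⟨0, hn⟩⟩
  obtain ⟨v₀, hv₀⟩ := exists_ne (0 : Fin n → ℝ)
  have hv₀n : 0 < ‖v₀‖ := norm_pos_iff.mpr hv₀
  -- D and its properties
  set D := diamC K C with hDdef
  have hDbdd := diam_bddAbove hCconv hMK hδC hballC (K := K)
  have hDmem : ∀ x ∈ K, ∀ y ∈ K, 2 * gg C (x - y) ≤ D := by
    intro x hx y hy
    refine le_csSup hDbdd ⟨x, hx, y, hy, ?_⟩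
    rw [circR_segment hCconv]
  have hD0 : 0 ≤ D := by
    have := hDmem k₀ hk₀K k₀ hk₀K
    rw [sub_self, gg_zero hδC hballC] at this
    linarith
  have hDpos : 0 < D := by
    set x₂ := k₀ + (δK / (2 * ‖v₀‖)) • v₀ with hx₂def
    have hx₂K : x₂ ∈ K := by
      refine hballK ?_
      rw [Metric.mem_ball, dist_eq_norm]
      have : x₂ - k₀ = (δK / (2 * ‖v₀‖)) • v₀ := by rw [hx₂def]; abel
      rw [this, norm_smul, Real.norm_eq_abs, abs_of_pos (by positivity)]
      rw [div_mul_eq_mul_div, mul_comm]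
      rw [div_lt_iff₀ (by positivity)]
      nlinarith
    have hxdiff : ‖x₂ - k₀‖ = δK / 2 := by
      have : x₂ - k₀ = (δK / (2 * ‖v₀‖)) • v₀ := by rw [hx₂def]; abel
      rw [this, norm_smul, Real.norm_eq_abs, abs_of_pos (by positivity)]
      field_simp
    have hgpos : 0 < gg C (x₂ - k₀) := by
      have hlb := gg_lb hMCpos hMC hδC hballC (x₂ - k₀)
      nlinarith [gg_nonneg C (x₂ - k₀)]
    have := hDmem x₂ hx₂K k₀ hk₀K
    linarith
  -- inradius admissible sets
  have hadmr_bdd : ∀ (W : Set (Fin n → ℝ)) (u v : Fin n → ℝ), u ∈ W → v ∈ W → u ≠ v →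
      BddAbove (admr K W) := by
    intro W u v hu hv huv
    have huv' : 0 < ‖u - v‖ := by
      rw [norm_pos_iff, sub_ne_zero]; exact huv
    refine ⟨2 * MK / ‖u - v‖, ?_⟩
    rintro ρ ⟨hρ0, t, ht⟩
    have h1 : t + ρ • u ∈ K := ht (aux10_mem_vadd.mpr (by
      have : t + ρ • u - t = ρ • u := by abel
      rw [this]; exact Set.smul_mem_smul_set hu))
    have h2 : t + ρ • v ∈ K := ht (aux10_mem_vadd.mpr (by
      have : t + ρ • v - t = ρ • v := by abel
      rw [this]; exact Set.smul_mem_smul_set hv))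
    have hnorm : ‖(t + ρ • u) - (t + ρ • v)‖ = ρ * ‖u - v‖ := by
      have : (t + ρ • u) - (t + ρ • v) = ρ • (u - v) := by rw [smul_sub]; abel
      rw [this, norm_smul, Real.norm_eq_abs, abs_of_nonneg hρ0]
    have hb : ‖(t + ρ • u) - (t + ρ • v)‖ ≤ 2 * MK := by
      calc ‖(t + ρ • u) - (t + ρ • v)‖ ≤ ‖t + ρ • u‖ + ‖t + ρ • v‖ := norm_sub_le _ _
        _ ≤ 2 * MK := by have := hMK _ h1; have := hMK _ h2; linarith
    rw [le_div_iff₀ huv']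
    linarith [hnorm ▸ hb]
  set w := (δC / (2 * ‖v₀‖)) • v₀ with hwdef
  have hw0 : w ≠ 0 := smul_ne_zero (by positivity) hv₀
  have hwC : c₀ + w ∈ C := by
    refine hballC ?_
    rw [Metric.mem_ball, dist_eq_norm]
    have : c₀ + w - c₀ = w := by abel
    rw [this, hwdef, norm_smul, Real.norm_eq_abs, abs_of_pos (by positivity),
      div_mul_eq_mul_div, mul_comm, div_lt_iff₀ (by positivity)]
    nlinarith
  have hwB : w ∈ B := by
    refine Set.mem_sub.mpr ⟨c₀ + w, hwC, c₀, hc₀C, by abel⟩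
  have h0B : (0 : Fin n → ℝ) ∈ B := by
    have := Set.sub_mem_sub hc₀C hc₀C
    rwa [sub_self] at this
  have hbddrB : BddAbove (admr K B) := hadmr_bdd B w 0 hwB h0B hw0
  have hbddrC : BddAbove (admr K C) := hadmr_bdd C (c₀ + w) c₀ hwC hc₀C (by
    intro h; apply hw0; have := congrArg (· - c₀) h; simpa using this)
  have h0admr : ∀ W : Set (Fin n → ℝ), W.Nonempty → (0:ℝ) ∈ admr K W := by
    intro W hW
    refine ⟨le_refl 0, k₀, fun x hx => ?_⟩
    rw [aux10_mem_vadd, Set.zero_smul_set hW] at hx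
    rw [Set.mem_zero, sub_eq_zero] at hx
    rw [hx]; exact hk₀K
  have hr0 : 0 ≤ inrad K C := le_csSup hbddrC (h0admr C hCne)
  have hrB0 : 0 ≤ inrad K B := le_csSup hbddrB (h0admr B ⟨0, h0B⟩)
  have hrpos : 0 < inrad K C := by
    have hmem : δK / (2 * MC) ∈ admr K C := by
      refine ⟨by positivity, k₀, fun x hx => ?_⟩
      rw [aux10_mem_vadd] at hx
      obtain ⟨c', hc', hce⟩ := Set.mem_smul_set.mp hx
      refine hballK ?_
      rw [Metric.mem_ball, dist_eq_norm, ← hce, norm_smul, Real.norm_eq_abs,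
        abs_of_pos (by positivity)]
      have := hMC c' hc'
      rw [div_mul_eq_mul_div, div_lt_iff₀ (by positivity)]
      nlinarith
    calc (0:ℝ) < δK / (2 * MC) := by positivity
      _ ≤ inrad K C := le_csSup hbddrC hmem
  -- Spherical intersection property from completeness
  have hSIP : ∀ p : Fin n → ℝ, (∀ z ∈ K, gg C (p - z) ≤ D / 2) → p ∈ K := by
    intro p hp
    by_contra hpK
    set K' := convexHull ℝ (insert p K) with hK'def
    have hK'conv : Convex ℝ K' := convex_convexHull ℝ _
    have hK'comp : IsCompact K' := compact_hull_insert hKconv hKcomp hKne p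
    have hKK' : K ⊆ K' := (Set.subset_insert p K).trans (subset_convexHull ℝ _)
    have hK'int : (interior K').Nonempty := ⟨k₀, interior_mono hKK' hk₀i⟩
    have hpK' : p ∈ K' := subset_convexHull ℝ _ (Set.mem_insert p K)
    have hss : K ⊂ K' := (Set.ssubset_iff_of_subset hKK').mpr ⟨p, hpK', hpK⟩
    have hlt := hcomp K' ⟨hK'conv, hK'comp, hK'int⟩ hss
    have hins : ∀ a ∈ insert p K, ∀ b ∈ insert p K, gg C (a - b) ≤ D / 2 := by
      intro a ha b hb
      rcases ha with rfl | ha <;> rcases hb with rfl | hb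
      · rw [sub_self, gg_zero hδC hballC]; linarith
      · exact hp b hb
      · have h := hp a ha
        rw [← gg_neg (a - b), neg_sub]
        exact h
      · have := hDmem a ha b hb; linarith
    have hsub1 : ∀ b ∈ insert p K, ∀ a ∈ K', gg C (a - b) ≤ D / 2 := by
      intro b hb
      have hconvS : Convex ℝ {a : Fin n → ℝ | gg C (a - b) ≤ D / 2} := by
        intro x hx y hy α β hα hβ hαβ
        simp only [Set.mem_setOf_eq] at hx hy ⊢
        have heq : α • x + β • y - b = α • (x - b) + β • (y - b) := by
          match_scalars <;> linarith
        rw [heq]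
        have h1 := gg_add hCconv hδC hballC (α • (x - b)) (β • (y - b))
        have h2 := gg_smul_le hCconv hδC hballC hα (x - b)
        have h3 := gg_smul_le hCconv hδC hballC hβ (y - b)
        nlinarith
      have hsub : K' ⊆ {a : Fin n → ℝ | gg C (a - b) ≤ D / 2} :=
        convexHull_min (fun a ha => hins a ha b hb) hconvS
      exact fun a ha => hsub ha
    have hsub2 : ∀ a ∈ K', ∀ b ∈ K', gg C (a - b) ≤ D / 2 := by
      intro a ha
      have hconvS : Convex ℝ {b : Fin n → ℝ | gg C (a - b) ≤ D / 2} := by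
        intro x hx y hy α β hα hβ hαβ
        simp only [Set.mem_setOf_eq] at hx hy ⊢
        have heq : a - (α • x + β • y) = α • (a - x) + β • (a - y) := by
          match_scalars <;> linarith
        rw [heq]
        have h1 := gg_add hCconv hδC hballC (α • (a - x)) (β • (a - y))
        have h2 := gg_smul_le hCconv hδC hballC hα (a - x)
        have h3 := gg_smul_le hCconv hδC hballC hβ (a - y)
        nlinarith
      have hsub : K' ⊆ {b : Fin n → ℝ | gg C (a - b) ≤ D / 2} :=
        convexHull_min (fun b hb => hsub1 b hb a ha) hconvS
      exact fun b hb => hsub hb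
    have hD' : diamC K' C ≤ D := by
      rw [diamC_eq]
      refine Real.sSup_le ?_ hD0
      rintro d ⟨x, hx, y, hy, rfl⟩
      rw [circR_segment hCconv]
      have := hsub2 x hx y hy
      linarith
    rw [← hDdef] at hlt
    linarith
  -- named quantities
  set sC := asym C with hsCdef
  set sK := asym K with hsKdef
  set R := circR K C with hRdef
  set RB := circR K B with hRBdef
  set rB := inrad K B with hrBdef
  set r := inrad K C with hrdef
  have hsCInf : sC = sInf (admR (-C) C) := rfl
  have hsKInf : sK = sInf (admR (-K) K) := rfl
  have hrBeq : rB = sSup (admr K B) := rfl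
  have h1sC : (0:ℝ) < 1 + sC := by linarith
  -- Step (1): R ≤ (1 + sC) * RB
  have step1 : ∀ ρ ∈ admR K B, ∀ σ ∈ admR (-C) C, R ≤ (1+σ)*ρ := by
    rintro ρ ⟨hρ0, u, hu⟩ σ ⟨hσ0, t, ht⟩
    refine circR_le ⟨by positivity, u + ρ • t, fun a ha => ?_⟩
    have h2 := hu ha
    rw [aux10_mem_vadd] at h2 ⊢
    obtain ⟨b, hb, hbe⟩ := Set.mem_smul_set.mp h2
    obtain ⟨c₁, hc₁, c₂, hc₂, hce⟩ := Set.mem_sub.mp hb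
    have h3 : -c₂ ∈ t +ᵥ σ • C := ht (Set.neg_mem_neg.mpr hc₂)
    rw [aux10_mem_vadd] at h3
    obtain ⟨c₃, hc₃, hc₃e⟩ := Set.mem_smul_set.mp h3
    have hab : ρ • (c₁ - c₂) = a - u := by rw [hce]; exact hbe
    have key : a - (u + ρ • t) = ρ • c₁ + (ρ*σ) • c₃ := by
      calc a - (u + ρ • t) = (a - u) - ρ • t := by abel
        _ = ρ • (c₁ - c₂) - ρ • t := by rw [hab]
        _ = ρ • c₁ + ρ • (-c₂ - t) := by rw [smul_sub, smul_sub, smul_neg]; abel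
        _ = ρ • c₁ + ρ • (σ • c₃) := by rw [hc₃e]
        _ = ρ • c₁ + (ρ*σ) • c₃ := by rw [smul_smul]
    rw [key]
    have hsum : ((1+σ)*ρ) • C = ρ • C + (ρ*σ) • C := by
      rw [← Convex.add_smul hCconv hρ0.le (by positivity : (0:ℝ) ≤ ρ*σ)]
      congr 1
      ring
    rw [hsum]
    exact Set.add_mem_add (Set.smul_mem_smul_set hc₁) (Set.smul_mem_smul_set hc₃)
  have h1 : R ≤ (1 + sC) * RB := by
    have step2 : ∀ ρ ∈ admR K B, R ≤ (1 + sC) * ρ := by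
      intro ρ hρ
      have hρ0 := hρ.1
      have hlb : R / ρ - 1 ≤ sC := by
        rw [hsCInf]
        refine le_csInf hSC_ne fun σ hσ => ?_
        have h := step1 ρ hρ σ hσ
        rw [sub_le_iff_le_add, div_le_iff₀ hρ0]
        nlinarith
      rw [sub_le_iff_le_add, div_le_iff₀ hρ0] at hlb
      nlinarith
    have hlb2 : R / (1 + sC) ≤ RB := by
      rw [hRBdef, circR_eq]
      refine le_csInf hRKB_ne fun ρ hρ => ?_
      rw [div_le_iff₀ h1sC]
      nlinarith [step2 ρ hρ]
    rw [div_le_iff₀ h1sC] at hlb2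
    nlinarith
  -- Step (2): rB ≤ sC/(1+sC) * r
  have h2 : rB ≤ sC / (1 + sC) * r := by
    rw [hrBeq]
    refine Real.sSup_le ?_ (by positivity)
    rintro ρ ⟨hρ0, wt, hwt⟩
    rcases eq_or_lt_of_le hρ0 with hρz | hρpos
    · rw [← hρz]; positivity
    have inner : ∀ σ ∈ admR (-C) C, (1+σ)/σ * ρ ≤ r := by
      rintro σ ⟨hσ0, t, ht⟩
      have hmem : (1+σ)/σ * ρ ∈ admr K C := by
        refine ⟨by positivity, wt + (ρ/σ) • t, fun x hx => ?_⟩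
        rw [aux10_mem_vadd] at hx
        have hsplit : ((1+σ)/σ * ρ) • C = ρ • C + (ρ/σ) • C := by
          rw [← Convex.add_smul hCconv hρ0 (by positivity : (0:ℝ) ≤ ρ/σ)]
          congr 1
          field_simp
          ring
        rw [hsplit] at hx
        obtain ⟨y₁, hy₁, y₂, hy₂, hyx⟩ := Set.mem_add.mp hx
        obtain ⟨c₁, hc₁, hc₁e⟩ := Set.mem_smul_set.mp hy₁
        obtain ⟨c₂, hc₂, hc₂e⟩ := Set.mem_smul_set.mp hy₂
        have h3 : -c₂ ∈ t +ᵥ σ • C := ht (Set.neg_mem_neg.mpr hc₂)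
        rw [aux10_mem_vadd] at h3
        obtain ⟨c₃, hc₃, hc₃e⟩ := Set.mem_smul_set.mp h3
        apply hwt
        rw [aux10_mem_vadd]
        refine Set.mem_smul_set.mpr ⟨c₁ - c₃, Set.sub_mem_sub hc₁ hc₃, ?_⟩
        have hc2 : c₂ = -t - σ • c₃ := by rw [hc₃e]; abel
        have hx' : ρ • c₁ + (ρ/σ) • c₂ = x - (wt + (ρ/σ) • t) := by
          rw [hc₁e, hc₂e, hyx]
        have e2 : (ρ/σ) • c₂ = -((ρ/σ) • t) - ρ • c₃ := by
          rw [hc2, smul_sub, smul_neg, smul_smul, div_mul_cancel₀ _ (ne_of_gt hσ0)]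
        rw [e2] at hx'
        have h' : ρ • c₁ - ρ • c₃ - (x - wt)
            = (ρ • c₁ + (-((ρ/σ) • t) - ρ • c₃)) - (x - (wt + (ρ/σ) • t)) := by abel
        rw [hx', sub_self] at h'
        rw [smul_sub]
        exact sub_eq_zero.mp h'
      exact le_csSup hbddrC hmem
    obtain ⟨σ₁, hσ₁⟩ := Set.Nonempty.mono (fun x h => h) hSC_ne
    have hρltr : ρ < r := by
      have h := inner σ₁ hσ₁
      have hσ₁0 := hσ₁.1
      have hgt : (1+σ₁)/σ₁ * ρ = ρ + ρ/σ₁ := by field_simp; ring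
      rw [hgt] at h
      have : 0 < ρ/σ₁ := by positivity
      linarith
    have hkey : ρ / (r - ρ) ≤ sC := by
      rw [hsCInf]
      refine le_csInf hSC_ne fun σ hσ => ?_
      have h := inner σ hσ
      have hσ0 := hσ.1
      rw [div_le_iff₀ (by linarith : (0:ℝ) < r - ρ)]
      have h' := mul_le_mul_of_nonneg_right h (le_of_lt hσ0)
      have he : (1+σ)/σ * ρ * σ = ρ * (1+σ) := by field_simp
      rw [he] at h'
      nlinarith
    rw [div_le_iff₀ (by linarith : (0:ℝ) < r - ρ)] at hkey
    rw [div_mul_eq_mul_div, le_div_iff₀ h1sC]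
    nlinarith
  -- Step (4): D/2 - RB ≤ rB
  have h4 : D/2 - RB ≤ rB := by
    have hstep : D/2 - rB ≤ RB := by
      rw [hRBdef, circR_eq]
      refine le_csInf hRKB_ne ?_
      rintro ρ ⟨hρ0, c, hc⟩
      by_cases hcase : D/2 - ρ ≤ 0
      · linarith
      push_neg at hcase
      have hmem : D/2 - ρ ∈ admr K B := by
        refine ⟨by linarith, c, fun x hx => ?_⟩
        rw [aux10_mem_vadd] at hx
        refine hSIP x fun z hz => ?_
        have g1 : gg C (x - c) ≤ D/2 - ρ := gg_le hcase hx
        have g2 : gg C (c - z) ≤ ρ := by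
          have hz2 := hc hz
          rw [aux10_mem_vadd] at hz2
          have hgz := gg_le hρ0 hz2
          have e : c - z = -(z - c) := by abel
          rw [e, gg_neg]
          exact hgz
        have hadd := gg_add hCconv hδC hballC (x - c) (c - z)
        have he : x - c + (c - z) = x - z := by abel
        rw [he] at hadd
        linarith
      have := le_csSup hbddrB hmem
      rw [← hrBeq] at this
      linarith
    linarith
  -- Step (3): RB ≤ sK * rB
  have stepA : ∀ τ ∈ admR (-K) K, RB ≤ τ/(1+τ) * (D/2) := by
    rintro τ ⟨hτ0, t, ht⟩
    have h1τ : (0:ℝ) < 1 + τ := by linarith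
    refine le_of_forall_pos_le_add fun ε hε => ?_
    have hρ' : (0:ℝ) < D/2 + ε := by linarith
    have hadm : τ/(1+τ) * (D/2 + ε) ∈ admR K B := by
      refine ⟨by positivity, -((1+τ)⁻¹ • t), fun x hx => ?_⟩
      have h2' : -x ∈ t +ᵥ τ • K := ht (Set.neg_mem_neg.mpr hx)
      rw [aux10_mem_vadd] at h2'
      obtain ⟨y, hy, hye⟩ := Set.mem_smul_set.mp h2'
      have hgg : gg C (x - y) ≤ D/2 := by have := hDmem x hx y hy; linarith
      have hxy : x - y ∈ (D/2 + ε) • B := gg_mem_of_gt hCconv hδC hballC (by linarith)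
      obtain ⟨b, hb, hbe⟩ := Set.mem_smul_set.mp hxy
      rw [aux10_mem_vadd]
      refine Set.mem_smul_set.mpr ⟨b, hb, ?_⟩
      apply smul_right_injective (Fin n → ℝ) (ne_of_gt h1τ)
      show (1 + τ) • ((τ / (1 + τ) * (D / 2 + ε)) • b) = (1 + τ) • (x - -((1 + τ)⁻¹ • t))
      rw [smul_smul]
      have hcm : (1+τ) * (τ/(1+τ) * (D/2+ε)) = τ * (D/2+ε) := by
        field_simp
      rw [hcm, ← smul_smul, hbe]
      have ht' : t = -x - τ • y := by rw [hye]; abel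
      rw [sub_neg_eq_add, smul_add, smul_smul, mul_inv_cancel₀ (ne_of_gt h1τ), one_smul, ht']
      rw [smul_sub, add_smul, one_smul]
      abel
    have hRBle := circR_le hadm
    rw [← hRBdef] at hRBle
    have hfrac : τ/(1+τ) ≤ 1 := by rw [div_le_one h1τ]; linarith
    have hexp : τ/(1+τ) * (D/2 + ε) = τ/(1+τ)*(D/2) + τ/(1+τ)*ε := by ring
    rw [hexp] at hRBle
    have hfe : τ/(1+τ)*ε ≤ ε := by nlinarith
    linarith
  have hRBltD : RB < D/2 := by
    obtain ⟨τ₁, hτ₁⟩ := Set.Nonempty.mono (fun x h => h) hSK_ne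
    have h := stepA τ₁ hτ₁
    have hτ₁0 := hτ₁.1
    have hfrac : τ₁/(1+τ₁) < 1 := by rw [div_lt_one (by linarith)]; linarith
    nlinarith
  have h3 : RB ≤ sK * rB := by
    have hkey : RB / (D/2 - RB) ≤ sK := by
      rw [hsKInf]
      refine le_csInf hSK_ne fun τ hτ => ?_
      have h := stepA τ hτ
      have hτ0 := hτ.1
      rw [div_le_iff₀ (by linarith : (0:ℝ) < D/2 - RB)]
      have h' := mul_le_mul_of_nonneg_right h (by linarith : (0:ℝ) ≤ 1+τ)
      have he : τ/(1+τ)*(D/2)*(1+τ) = τ*(D/2) := by field_simp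
      rw [he] at h'
      nlinarith
    rw [div_le_iff₀ (by linarith : (0:ℝ) < D/2 - RB)] at hkey
    have h5 : sK * (D/2 - RB) ≤ sK * rB := mul_le_mul_of_nonneg_left h4 hsK0
    linarith
  -- finish
  have hfinal : R ≤ sK * sC * r := by
    have a2 : (1+sC) * RB ≤ (1+sC) * (sK * rB) :=
      mul_le_mul_of_nonneg_left h3 (by linarith)
    have a3 : sK * rB ≤ sK * (sC/(1+sC) * r) := mul_le_mul_of_nonneg_left h2 hsK0
    have a4 : (1+sC) * (sK * (sC/(1+sC) * r)) = sK * sC * r := by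
      field_simp
    calc R ≤ (1+sC)*RB := h1
      _ ≤ (1+sC)*(sK*rB) := a2
      _ ≤ (1+sC)*(sK*(sC/(1+sC)*r)) := mul_le_mul_of_nonneg_left a3 (by linarith)
      _ = sK*sC*r := a4
  rw [div_le_iff₀ hrpos]
  linarith
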